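/- For every graph G and even integer d = 2k with k ≥ 1, χ(G^d) ≤ ω(G^d)^2. -/

import Mathlib

open SimpleGraph Set

variable {V : Type*}

/-- The `d`-th power of a graph: distinct vertices adjacent iff joined by a walk
of length at most `d`. -/
def gpow (G : SimpleGraph V) (d : ℕ) : SimpleGraph V where
  Adj u v := u ≠ v ∧ ∃ p : G.Walk u v, p.length ≤ d
  symm := by
    refine ⟨?_⟩
    rintro u v ⟨h, p, hp⟩
    exact ⟨h.symm, p.reverse, by simpa using hp⟩
  loopless := by refine ⟨?_⟩; rintro u ⟨h, _⟩; exact h rfl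

/-- `v` is weakly `r`-reachable from `u` with respect to the ordering `σ`:
there is a path (walk) of length at most `r` from `u` to `v` all of whose
vertices are `≥_σ v`. -/
def wreach (G : SimpleGraph V) (σ : V → ℕ) (r : ℕ) (u v : V) : Prop :=
  ∃ p : G.Walk u v, p.length ≤ r ∧ ∀ x ∈ p.support, σ v ≤ σ x

/-- The weak `r`-coloring number of the ordering `σ`. -/
noncomputable def wcolOrd (G : SimpleGraph V) (σ : V → ℕ) (r : ℕ) : ℕ :=
  sSup { n | ∃ u, n = {v | wreach G σ r u v}.ncard }

/-- The weak `r`-coloring number of `G`: minimum over (injective) vertex orderings. -/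
noncomputable def wcol (G : SimpleGraph V) (r : ℕ) : ℕ :=
  sInf { c | ∃ σ : V → ℕ, Function.Injective σ ∧ wcolOrd G σ r = c }

/-- The coloring number of the ordering `σ`: max over vertices of one plus
the number of earlier neighbors. -/
noncomputable def colOrd (G : SimpleGraph V) (σ : V → ℕ) : ℕ :=
  sSup { n | ∃ u, n = 1 + {v | G.Adj u v ∧ σ v < σ u}.ncard }

/-- The coloring number of `G` (one plus degeneracy). -/
noncomputable def colNum (G : SimpleGraph V) : ℕ :=
  sInf { c | ∃ σ : V → ℕ, Function.Injective σ ∧ colOrd G σ = c }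

/-- Maximum degree. -/
noncomputable def maxDeg (G : SimpleGraph V) : ℕ :=
  sSup { n | ∃ u, n = (G.neighborSet u).ncard }

/-- Clique number. -/
noncomputable def cliqueNum' (G : SimpleGraph V) : ℕ :=
  sSup { n | ∃ s : Finset V, G.IsNClique n s }

/-- A clustering of `H`: a partition of the vertex set into cliques. -/
def IsClustering (H : SimpleGraph V) (𝒳 : Set (Set V)) : Prop :=
  Setoid.IsPartition 𝒳 ∧ ∀ A ∈ 𝒳, H.IsClique A

/-- The quotient graph `H/𝒳`: blocks are vertices, distinct blocks adjacent iff some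
pair of their elements is adjacent in `H`. -/
def quotGraph (H : SimpleGraph V) (𝒳 : Set (Set V)) : SimpleGraph 𝒳 where
  Adj A B := A ≠ B ∧ ∃ a ∈ (A : Set V), ∃ b ∈ (B : Set V), H.Adj a b
  symm := by
    refine ⟨?_⟩
    rintro A B ⟨hne, a, ha, b, hb, hab⟩
    exact ⟨hne.symm, b, hb, a, ha, hab.symm⟩
  loopless := by refine ⟨?_⟩; rintro A ⟨h, _⟩; exact h rfl

/-- `S` induces a disjoint union of complete graphs in `H`
(adjacency is transitive on `S`). -/
def IsClusterSet (H : SimpleGraph V) (S : Set V) : Prop :=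
  ∀ a ∈ S, ∀ b ∈ S, ∀ c ∈ S, H.Adj a b → H.Adj b c → a ≠ c → H.Adj a c

/-- The subchromatic number: least `c` admitting a `c`-coloring in which every color
class induces a disjoint union of complete graphs. -/
noncomputable def subchrom (H : SimpleGraph V) : ℕ :=
  sInf { c | ∃ f : V → Fin c, ∀ i, IsClusterSet H (f ⁻¹' {i}) }

/-- A semi-ladder of length `k`: `x i` non-adjacent to `y i`, while `x i` adjacent
to `y j` whenever `i < j`. -/
def IsSemiLadder (H : SimpleGraph V) {k : ℕ} (x y : Fin k → V) : Prop :=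
  (∀ i, ¬ H.Adj (x i) (y i)) ∧ ∀ i j, i < j → H.Adj (x i) (y j)

/-- The semi-ladder index of `H` is at most `q`. -/
def semiLadderIndexLE (H : SimpleGraph V) (q : ℕ) : Prop :=
  ∀ (k : ℕ) (x y : Fin k → V), IsSemiLadder H x y → k ≤ q

/-- Closed neighborhood. -/
def closedNbhd (H : SimpleGraph V) (a : V) : Set V := insert a (H.neighborSet a)

/-- Treedepth at most `k`, via a forest (ancestor) order: a strict partial order in
which ancestors of each vertex form a chain of size `< k`, and every edge joins a
comparable pair. -/
def treedepthLE (G : SimpleGraph V) (k : ℕ) : Prop :=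
  ∃ A : V → V → Prop,
    (∀ u v w, A u v → A v w → A u w) ∧ (∀ v, ¬ A v v) ∧
    (∀ a b v, A a v → A b v → a = b ∨ A a b ∨ A b a) ∧
    (∀ u v, G.Adj u v → A u v ∨ A v u) ∧
    (∀ v, {a | A a v}.ncard < k)
universe u
/-- Greedy coloring: max degree D implies (D+1)-colorable. -/
lemma greedy_aux : ∀ (n : ℕ) {V : Type u} [Fintype V] (H : SimpleGraph V) (D : ℕ),
    Fintype.card V ≤ n → (∀ v, (H.neighborSet v).ncard ≤ D) → H.Colorable (D + 1) := by
  intro n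
  induction n with
  | zero =>
    intro V _ H D hcard _
    have : IsEmpty V := Fintype.card_eq_zero_iff.mp (Nat.le_zero.mp hcard)
    exact ⟨Coloring.mk isEmptyElim fun {v} => isEmptyElim v⟩
  | succ n ih =>
    intro V _ H D hcard hdeg
    classical
    rcases isEmpty_or_nonempty V with hV | hV
    · exact ⟨Coloring.mk isEmptyElim fun {v} => isEmptyElim v⟩
    · obtain ⟨v⟩ := hV
      set V' := {u : V // u ≠ v}
      let H' : SimpleGraph V' := H.comap Subtype.val
      have hcard' : Fintype.card V' ≤ n := by
        have h1 : Fintype.card V' < Fintype.card V :=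
          Fintype.card_subtype_lt (x := v) (by simp)
        omega
      have hdeg' : ∀ u : V', (H'.neighborSet u).ncard ≤ D := by
        intro u
        have himg : Subtype.val '' (H'.neighborSet u) ⊆ H.neighborSet u.val := by
          rintro x ⟨y, hy, rfl⟩; exact hy
        calc (H'.neighborSet u).ncard
            = (Subtype.val '' (H'.neighborSet u)).ncard :=
              (Set.ncard_image_of_injective _ Subtype.val_injective).symm
          _ ≤ (H.neighborSet u.val).ncard :=
              Set.ncard_le_ncard himg (Set.toFinite _)
          _ ≤ D := hdeg _
      obtain ⟨C⟩ := ih H' D hcard' hdeg'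
      -- find a free color for v
      set S : Set (Fin (D + 1)) := C '' {u : V' | H.Adj u.val v} with hS
      have hSn : S.ncard ≤ D := by
        have h1 : S.ncard ≤ {u : V' | H.Adj u.val v}.ncard :=
          Set.ncard_image_le (Set.toFinite _)
        have h2 : {u : V' | H.Adj u.val v}.ncard ≤ (H.neighborSet v).ncard := by
          have := Set.ncard_image_of_injective {u : V' | H.Adj u.val v}
            (Subtype.val_injective)
          rw [← this]
          refine Set.ncard_le_ncard ?_ (Set.toFinite _)
          rintro x ⟨y, hy, rfl⟩; exact hy.symm
        exact h1.trans (h2.trans (hdeg v))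
      have hc : ∃ c : Fin (D + 1), c ∉ S := by
        by_contra hcon
        push_neg at hcon
        have : S = Set.univ := Set.eq_univ_iff_forall.mpr hcon
        rw [this, Set.ncard_univ] at hSn
        simp [Nat.card_eq_fintype_card] at hSn
      obtain ⟨c, hcS⟩ := hc
      refine ⟨Coloring.mk (fun u => if h : u = v then c else C ⟨u, h⟩) ?_⟩
      intro a b hab heq
      by_cases ha : a = v <;> by_cases hb : b = v
      · exact H.loopless.irrefl v (by rw [ha, hb] at hab; exact hab)
      · rw [dif_pos ha, dif_neg hb] at heq
        exact hcS ⟨⟨b, hb⟩, by simpa [ha] using hab.symm, heq.symm⟩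
      · rw [dif_neg ha, dif_pos hb] at heq
        exact hcS ⟨⟨a, ha⟩, by simpa [hb] using hab, heq⟩
      · rw [dif_neg ha, dif_neg hb] at heq
        exact C.valid (by exact hab : H'.Adj ⟨a, ha⟩ ⟨b, hb⟩) heq

lemma walk_split {V : Type u} {G : SimpleGraph V} {u v : V} (p : G.Walk u v) :
    ∀ (a b : ℕ), p.length ≤ a + b →
    ∃ (w : V) (q : G.Walk u w) (r : G.Walk w v), q.length ≤ a ∧ r.length ≤ b := by
  induction p with
  | nil => intro a b _; exact ⟨_, Walk.nil, Walk.nil, by simp, by simp⟩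
  | cons e p ih =>
    intro a b h
    cases a with
    | zero => exact ⟨_, Walk.nil, Walk.cons e p, by simp, by simpa using h⟩
    | succ a =>
      obtain ⟨w, q, r, hq, hr⟩ := ih a b (by simpa [Nat.succ_add] using h)
      exact ⟨w, Walk.cons e q, r, Nat.succ_le_succ hq, hr⟩

lemma gpow_walk_of_mem_closed {V : Type u} {G : SimpleGraph V} {k : ℕ} {v a : V}
    (h : a ∈ insert v ((gpow G k).neighborSet v)) :
    ∃ p : G.Walk v a, p.length ≤ k := by
  rcases h with h | h
  · subst h; exact ⟨Walk.nil, by simp⟩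
  · exact h.2

lemma clique_closed {V : Type u} {G : SimpleGraph V} {k : ℕ} (v : V) :
    (gpow G (2 * k)).IsClique (insert v ((gpow G k).neighborSet v)) := by
  intro a ha b hb hab
  obtain ⟨p, hp⟩ := gpow_walk_of_mem_closed ha
  obtain ⟨q, hq⟩ := gpow_walk_of_mem_closed hb
  exact ⟨hab, p.reverse.append q, by simp [Walk.length_append]; omega⟩

/-- For even d = 2k with k ≥ 1, χ(G^d) ≤ ω(G^d)². -/
theorem stmt10 [Fintype V] (G : SimpleGraph V) (k : ℕ) (hk : 1 ≤ k) :
    (gpow G (2 * k)).chromaticNumber ≤ ((cliqueNum' (gpow G (2 * k))) ^ 2 : ℕ) := by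
  classical
  rcases isEmpty_or_nonempty V with hV | hV
  · exact Colorable.chromaticNumber_le ⟨Coloring.mk isEmptyElim fun {v} => isEmptyElim v⟩
  set H := gpow G k with hH
  set D : ℕ := Finset.univ.sup (fun v => (H.neighborSet v).ncard) with hD
  have hDle : ∀ v, (H.neighborSet v).ncard ≤ D :=
    fun v => Finset.le_sup (f := fun v => (H.neighborSet v).ncard) (Finset.mem_univ v)
  -- clique number lower bound
  set ω := cliqueNum' (gpow G (2 * k)) with hω
  have hclique : D + 1 ≤ ω := by
    obtain ⟨v, -, hv⟩ := Finset.exists_mem_eq_sup Finset.univ Finset.univ_nonempty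
      (fun v => (H.neighborSet v).ncard)
    have hvmem : v ∉ H.neighborSet v := fun h => H.loopless.irrefl v h
    set s : Finset V := (Set.toFinite (insert v (H.neighborSet v))).toFinset with hs
    have hcard : s.card = D + 1 := by
      rw [hs, ← Set.ncard_eq_toFinset_card _ (Set.toFinite _), Set.ncard_insert_of_notMem hvmem, hD, hv]
    refine le_csSup ⟨Fintype.card V, ?_⟩ ⟨s, ?_, hcard⟩
    · rintro n ⟨t, ht⟩
      rw [← ht.card_eq]
      exact Finset.card_le_univ t
    · intro a ha b hb hab
      simp only [hs, Set.Finite.coe_toFinset] at ha hb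
      exact clique_closed v ha hb hab
  -- degree bound for gpow G (2*k)
  have hdeg2 : ∀ u : V, ((gpow G (2 * k)).neighborSet u).ncard + 1 ≤ (D + 1) ^ 2 := by
    intro u
    set F : V → Finset V := fun w => (Set.toFinite (insert w (H.neighborSet w))).toFinset
      with hF
    have hFcard : ∀ w, (F w).card ≤ D + 1 := by
      intro w
      rw [hF]
      rw [← Set.ncard_eq_toFinset_card _ (Set.toFinite _),
        Set.ncard_insert_of_notMem (show w ∉ H.neighborSet w from fun h => H.loopless.irrefl w h)]
      exact Nat.add_le_add_right (hDle w) 1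
    have hsub : (Set.toFinite (insert u ((gpow G (2 * k)).neighborSet u))).toFinset ⊆
        (F u).biUnion F := by
      intro x hx
      rw [Set.Finite.mem_toFinset] at hx
      rcases hx with hx | hx
      · subst hx
        refine Finset.mem_biUnion.mpr ⟨x, ?_, ?_⟩ <;>
          · rw [hF, Set.Finite.mem_toFinset]; exact Set.mem_insert _ _
      · obtain ⟨hne, p, hp⟩ := hx
        obtain ⟨w, q, r, hq, hr⟩ := walk_split p k k (by omega)
        refine Finset.mem_biUnion.mpr ⟨w, ?_, ?_⟩
        · rw [hF, Set.Finite.mem_toFinset]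
          by_cases hw : w = u
          · exact hw ▸ Set.mem_insert _ _
          · exact Set.mem_insert_of_mem _ ⟨Ne.symm hw, q, hq⟩
        · rw [hF, Set.Finite.mem_toFinset]
          by_cases hw : x = w
          · exact hw ▸ Set.mem_insert _ _
          · exact Set.mem_insert_of_mem _ ⟨(Ne.symm hw), r, hr⟩
    have h1 : ((gpow G (2 * k)).neighborSet u).ncard + 1 =
        ((Set.toFinite (insert u ((gpow G (2 * k)).neighborSet u))).toFinset).card := by
      rw [← Set.ncard_eq_toFinset_card _ (Set.toFinite _),
        Set.ncard_insert_of_notMem (show u ∉ (gpow G (2 * k)).neighborSet u from fun h => (gpow G (2 * k)).loopless.irrefl u h)]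
    calc ((gpow G (2 * k)).neighborSet u).ncard + 1
        = _ := h1
      _ ≤ ((F u).biUnion F).card := Finset.card_le_card hsub
      _ ≤ ∑ w ∈ F u, (F w).card := Finset.card_biUnion_le
      _ ≤ (F u).card * (D + 1) := by
          simpa using Finset.sum_le_card_nsmul (F u) (fun w => (F w).card) (D + 1)
            (fun w _ => hFcard w)
      _ ≤ (D + 1) * (D + 1) := Nat.mul_le_mul_right _ (hFcard u)
      _ = (D + 1) ^ 2 := (sq (D + 1)).symm
  -- greedy coloring
  have hcol : (gpow G (2 * k)).Colorable ((D + 1) ^ 2) := by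
    have := greedy_aux (Fintype.card V) (gpow G (2 * k)) ((D + 1) ^ 2 - 1) le_rfl
      (fun v => by have := hdeg2 v; omega)
    have hpos : 1 ≤ (D + 1) ^ 2 := Nat.one_le_pow _ _ (Nat.succ_pos D)
    simpa [Nat.sub_add_cancel hpos] using this
  have hcol2 : (gpow G (2 * k)).Colorable (ω ^ 2) :=
    hcol.mono (Nat.pow_le_pow_left hclique 2)
  exact hcol2.chromaticNumber_le
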